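/- If ρ is a separable density matrix on ℂ^{d_A} ⊗ ℂ^{d_B}, then its partial transposition ρ^{T_A} is again a separable density matrix (in particular it is positive semidefinite with trace 1 and admits a decomposition into Kronecker products of rank-one projectors). -/

import Mathlib

open scoped BigOperators ComplexOrder

/-- The rank-one matrix `x x*`, with entries `(x x*)_{ij} = x i * conj (x j)`. -/
def vecProjector {d : ℕ} (x : Fin d → ℂ) : Matrix (Fin d) (Fin d) ℂ :=
  fun i j => x i * (starRingEnd ℂ) (x j)

/-- A density matrix on `ℂ^{d_A} ⊗ ℂ^{d_B}` is separable if it is a finite convex combination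
of Kronecker products of rank-one projectors onto unit vectors. -/
def SeparableState {dA dB : ℕ}
    (ρ : Matrix (Fin dA × Fin dB) (Fin dA × Fin dB) ℂ) : Prop :=
  ∃ (K : ℕ) (p : Fin K → ℝ) (x : Fin K → Fin dA → ℂ) (y : Fin K → Fin dB → ℂ),
    (∀ k, 0 ≤ p k) ∧ (∑ k, p k = 1) ∧
    (∀ k, ∑ a, Complex.normSq (x k a) = 1) ∧
    (∀ k, ∑ b, Complex.normSq (y k b) = 1) ∧
    ρ = ∑ k, (p k : ℂ) •
      Matrix.kroneckerMap (· * ·) (vecProjector (x k)) (vecProjector (y k))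

/-- Partial transposition with respect to the first factor:
`(ρ^{T_A})_{(i,μ),(j,ν)} = ρ_{(j,μ),(i,ν)}`. -/
def partialTransposeA {dA dB : ℕ}
    (ρ : Matrix (Fin dA × Fin dB) (Fin dA × Fin dB) ℂ) :
    Matrix (Fin dA × Fin dB) (Fin dA × Fin dB) ℂ :=
  fun p q => ρ (q.1, p.2) (p.1, q.2)

/-- A rank-one matrix `z z*` over any finite index type is positive semidefinite. -/
lemma rankOne_posSemidef {n : Type*} [Fintype n] (z : n → ℂ) :
    Matrix.PosSemidef (Matrix.of fun i j => z i * (starRingEnd ℂ) (z j)) := by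
  rw [Matrix.posSemidef_iff_dotProduct_mulVec]
  constructor
  · ext i j
    simp [Matrix.conjTranspose_apply, mul_comm]
  · intro v
    have h : dotProduct (star v) ((Matrix.of fun i j => z i * (starRingEnd ℂ) (z j)).mulVec v)
        = star (∑ j, (starRingEnd ℂ) (z j) * v j) * (∑ j, (starRingEnd ℂ) (z j) * v j) := by
      simp [dotProduct, Matrix.mulVec, Finset.mul_sum, Finset.sum_mul,
        star_sum, Finset.sum_mul_sum]
      rw [Finset.sum_comm]
      apply Finset.sum_congr rfl; intro i _
      apply Finset.sum_congr rfl; intro j _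
      ring
    rw [h]
    exact star_mul_self_nonneg _

/-- A separable state is positive semidefinite. -/
lemma SeparableState.posSemidef' {dA dB : ℕ}
    {ρ : Matrix (Fin dA × Fin dB) (Fin dA × Fin dB) ℂ}
    (h : SeparableState ρ) : ρ.PosSemidef := by
  obtain ⟨K, p, x, y, hp, -, -, -, hρ⟩ := h
  have key : ρ = ∑ k, Matrix.of (fun i j =>
      (fun ab : Fin dA × Fin dB => ((Real.sqrt (p k) : ℝ) : ℂ) * (x k ab.1 * y k ab.2)) i *
      (starRingEnd ℂ) ((fun ab : Fin dA × Fin dB =>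
        ((Real.sqrt (p k) : ℝ) : ℂ) * (x k ab.1 * y k ab.2)) j)) := by
    rw [hρ]
    apply Finset.sum_congr rfl
    intro k _
    ext ⟨a, b⟩ ⟨c, d⟩
    have hs : ((Real.sqrt (p k) : ℝ) : ℂ) * ((Real.sqrt (p k) : ℝ) : ℂ) = (p k : ℂ) := by
      rw [← Complex.ofReal_mul, Real.mul_self_sqrt (hp k)]
    simp only [Matrix.smul_apply, Matrix.kroneckerMap_apply, Matrix.of_apply, vecProjector,
      smul_eq_mul, map_mul, Complex.conj_ofReal]
    rw [← hs]
    ring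
  rw [key]
  exact Finset.sum_induction _ _ (fun _ _ ha hb => ha.add hb) Matrix.PosSemidef.zero
    (fun k _ => rankOne_posSemidef _)

/-- If `ρ` is a separable density matrix on `ℂ^{d_A} ⊗ ℂ^{d_B}`, then its partial
transposition `ρ^{T_A}` is again a separable density matrix: it is positive semidefinite
with trace 1 and admits a decomposition into Kronecker products of rank-one projectors. -/
theorem partialTranspose_of_separable_is_separable (dA dB : ℕ)
    (ρ : Matrix (Fin dA × Fin dB) (Fin dA × Fin dB) ℂ)
    (hpsd : ρ.PosSemidef) (htr : ρ.trace = 1) (hsep : SeparableState ρ) :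
    SeparableState (partialTransposeA ρ) ∧
      (partialTransposeA ρ).PosSemidef ∧ (partialTransposeA ρ).trace = 1 := by
  obtain ⟨K, p, x, y, hp, hpsum, hx, hy, hρ⟩ := hsep
  have hsep' : SeparableState (partialTransposeA ρ) := by
    refine ⟨K, p, fun k a => (starRingEnd ℂ) (x k a), y, hp, hpsum, ?_, hy, ?_⟩
    · intro k
      simpa [Complex.normSq_conj] using hx k
    · funext q r
      simp only [partialTransposeA, hρ, Matrix.sum_apply, Matrix.smul_apply,
        Matrix.kroneckerMap_apply, vecProjector, smul_eq_mul, Complex.conj_conj]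
      apply Finset.sum_congr rfl
      intro k _
      ring
  refine ⟨hsep', hsep'.posSemidef', ?_⟩
  rw [show (partialTransposeA ρ).trace = ρ.trace from rfl, htr]
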